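/- Let K be a field, n = 2r+1 an odd integer with n ≥ 3, and let f_1, …, f_n ∈ K[y_0,y_1] be homogeneous forms of degree r which span the K-vector space of all homogeneous forms of degree r in K[y_0,y_1]. Then there exists an n×n skew-symmetric matrix M whose entries are homogeneous linear forms in K[y_0,y_1] such that: (1) M · (f_1, …, f_n)ᵀ = 0 as an identity of vectors of polynomials; and (2) for every (a,b) ∈ K² with (a,b) ≠ (0,0), the evaluated matrix M(a,b) over K has rank exactly n-1 (so its kernel is spanned by (f_1(a,b), …, f_n(a,b)), which is a nonzero vector). -/

import Mathlib

section Helpers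

variable {k : Type*} [CommRing k]

lemma sum_single_cond {n : ℕ} (c : k) (x : Fin n → k) (P : Fin n → Prop) [DecidablePred P]
    (j : ℕ) (hj : ∀ q : Fin n, P q ↔ (q : ℕ) = j) :
    (∑ q : Fin n, (if P q then c else 0) * x q) =
      if h : j < n then c * x ⟨j, h⟩ else 0 := by
  split_ifs with h
  · rw [Finset.sum_eq_single (⟨j, h⟩ : Fin n)]
    · rw [if_pos ((hj _).mpr rfl)]
    · intro q _ hq
      rw [if_neg, zero_mul]
      rw [hj]
      exact fun hh => hq (Fin.ext hh)
    · exact fun hh => absurd (Finset.mem_univ _) hh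
  · apply Finset.sum_eq_zero
    intro q _
    rw [if_neg, zero_mul]
    rw [hj]
    have := q.isLt
    omega

variable (r : ℕ)

/-- The canonical skew-symmetric matrix of "linear forms" in the two elements `u`, `v`. -/
def skewM (u v : k) : Matrix (Fin (2 * r + 1)) (Fin (2 * r + 1)) k :=
  fun p q =>
    (if (q : ℕ) = (p : ℕ) + r + 1 then v else 0)
    + (if ((q : ℕ) = (p : ℕ) + r ∧ 1 ≤ (p : ℕ)) then -u else 0)
    - (if (p : ℕ) = (q : ℕ) + r + 1 then v else 0)
    - (if ((p : ℕ) = (q : ℕ) + r ∧ 1 ≤ (q : ℕ)) then -u else 0)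

lemma skewM_transpose (u v : k) : (skewM r u v).transpose = -(skewM r u v) := by
  funext p q
  simp only [Matrix.transpose_apply, Matrix.neg_apply, skewM]
  ring

lemma skewM_mulVec (u v : k) (x : Fin (2 * r + 1) → k) (p : Fin (2 * r + 1)) :
    (skewM r u v).mulVec x p =
      (if h : (p : ℕ) + r + 1 < 2 * r + 1 then v * x ⟨(p : ℕ) + r + 1, h⟩ else 0)
      + (if h : (p : ℕ) + r < 2 * r + 1 ∧ 1 ≤ (p : ℕ) then -u * x ⟨(p : ℕ) + r, h.1⟩ else 0)
      - (if h : r + 1 ≤ (p : ℕ) then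
          v * x ⟨(p : ℕ) - (r + 1), lt_of_le_of_lt (Nat.sub_le _ _) p.isLt⟩ else 0)
      - (if h : r + 1 ≤ (p : ℕ) then
          -u * x ⟨(p : ℕ) - r, lt_of_le_of_lt (Nat.sub_le _ _) p.isLt⟩ else 0) := by
  have hp := p.isLt
  simp only [Matrix.mulVec, dotProduct, skewM, add_mul, sub_mul]
  rw [Finset.sum_sub_distrib, Finset.sum_sub_distrib, Finset.sum_add_distrib]
  congr 1
  congr 1
  congr 1
  · exact sum_single_cond v x _ ((p : ℕ) + r + 1) (fun q => Iff.rfl)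
  · -- second sum
    by_cases h1 : 1 ≤ (p : ℕ)
    · rw [sum_single_cond (-u) x _ ((p : ℕ) + r) (fun q => by simp [h1])]
      by_cases h2 : (p : ℕ) + r < 2 * r + 1
      · rw [dif_pos h2, dif_pos ⟨h2, h1⟩]
      · rw [dif_neg h2, dif_neg (by omega)]
    · rw [dif_neg (by omega)]
      apply Finset.sum_eq_zero
      intro q _
      rw [if_neg (by omega), zero_mul]
  · by_cases h : r + 1 ≤ (p : ℕ)
    · rw [sum_single_cond v x _ ((p : ℕ) - (r + 1))
        (fun q => by have := q.isLt; omega)]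
      rw [dif_pos (by omega : (p : ℕ) - (r + 1) < 2 * r + 1), dif_pos h]
    · rw [dif_neg h]
      apply Finset.sum_eq_zero
      intro q _
      rw [if_neg (by have := q.isLt; omega), zero_mul]
  · by_cases h : r + 1 ≤ (p : ℕ)
    · rw [sum_single_cond (-u) x _ ((p : ℕ) - r)
        (fun q => by have := q.isLt; omega)]
      rw [dif_pos (by omega : (p : ℕ) - r < 2 * r + 1), dif_pos h]
    · rw [dif_neg h]
      apply Finset.sum_eq_zero
      intro q _
      rw [if_neg (by have := q.isLt; omega), zero_mul]

/-- The standard vector of "monomials" built from `u`, `v`. -/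
def stdVec (u v : k) : Fin (2 * r + 1) → k :=
  fun j => if (j : ℕ) ≤ r then u ^ (r - (j : ℕ)) * v ^ (j : ℕ) else 0

lemma skewM_mulVec_stdVec (u v : k) : (skewM r u v).mulVec (stdVec r u v) = 0 := by
  funext p
  have hp := p.isLt
  rw [skewM_mulVec, Pi.zero_apply]
  by_cases h : r + 1 ≤ (p : ℕ)
  · rw [dif_neg (by omega), dif_neg (by omega), dif_pos h, dif_pos h]
    obtain ⟨j, hj⟩ : ∃ j, (p : ℕ) = j + r + 1 := ⟨(p : ℕ) - (r + 1), by omega⟩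
    have e1 : (p : ℕ) - (r + 1) = j := by omega
    have e2 : (p : ℕ) - r = j + 1 := by omega
    simp only [e1, e2, stdVec, Fin.val_mk]
    rw [if_pos (show j ≤ r by omega), if_pos (show j + 1 ≤ r by omega)]
    have e3 : r - j = (r - (j + 1)) + 1 := by omega
    rw [e3, pow_succ]
    ring
  · rw [dif_neg h, dif_neg h]
    have e1 : (if h1 : (p : ℕ) + r + 1 < 2 * r + 1
        then v * stdVec r u v ⟨(p : ℕ) + r + 1, h1⟩ else 0) = 0 := by
      split_ifs with h1
      · simp only [stdVec, Fin.val_mk]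
        rw [if_neg (by omega), mul_zero]
      · rfl
    have e2 : (if h2 : (p : ℕ) + r < 2 * r + 1 ∧ 1 ≤ (p : ℕ)
        then -u * stdVec r u v ⟨(p : ℕ) + r, h2.1⟩ else 0) = 0 := by
      split_ifs with h2
      · simp only [stdVec, Fin.val_mk]
        rw [if_neg (by omega), mul_zero]
      · rfl
    rw [e1, e2]
    ring

lemma skewM_ker {K : Type*} [Field K] (r : ℕ) (hr : 1 ≤ r) (a b : K)
    (hab : ¬(a = 0 ∧ b = 0)) (x : Fin (2 * r + 1) → K)
    (hx : (skewM r a b).mulVec x = 0) :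
    ∃ c : K, x = c • stdVec r a b := by
  -- extract the component equations
  have h1 : ∀ j (hj : j < r), a * x ⟨j + 1, by omega⟩ = b * x ⟨j, by omega⟩ := by
    intro j hj
    have e := congrFun hx ⟨j + r + 1, by omega⟩
    rw [skewM_mulVec] at e
    simp only [Fin.val_mk, Pi.zero_apply] at e
    rw [dif_neg (by omega), dif_neg (by omega), dif_pos (by omega), dif_pos (by omega)] at e
    have e1 : j + r + 1 - (r + 1) = j := by omega
    have e2 : j + r + 1 - r = j + 1 := by omega
    simp only [e1, e2] at e
    linear_combination e
  have h2 : b * x ⟨r + 1, by omega⟩ = 0 := by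
    have e := congrFun hx ⟨0, by omega⟩
    rw [skewM_mulVec] at e
    simp only [Fin.val_mk, Pi.zero_apply] at e
    rw [dif_pos (by omega), dif_neg (by omega), dif_neg (by omega), dif_neg (by omega)] at e
    have e1 : 0 + r + 1 = r + 1 := by omega
    simp only [e1] at e
    linear_combination e
  have h3 : ∀ j (hj1 : r + 2 ≤ j) (hj2 : j ≤ 2 * r),
      b * x ⟨j, by omega⟩ = a * x ⟨j - 1, by omega⟩ := by
    intro j hj1 hj2
    have e := congrFun hx ⟨j - r - 1, by omega⟩
    rw [skewM_mulVec] at e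
    simp only [Fin.val_mk, Pi.zero_apply] at e
    rw [dif_pos (by omega), dif_pos (by omega), dif_neg (by omega), dif_neg (by omega)] at e
    have e1 : j - r - 1 + r = j - 1 := by omega
    have e2 : j - 1 + 1 = j := by omega
    simp only [e1, e2] at e
    linear_combination e
  have h4 : a * x ⟨2 * r, by omega⟩ = 0 := by
    have e := congrFun hx ⟨r, by omega⟩
    rw [skewM_mulVec] at e
    simp only [Fin.val_mk, Pi.zero_apply] at e
    rw [dif_neg (by omega), dif_pos (by omega), dif_neg (by omega), dif_neg (by omega)] at e
    have e1 : r + r = 2 * r := by omega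
    simp only [e1] at e
    linear_combination -e
  by_cases ha : a = 0
  · subst ha
    have hb : b ≠ 0 := fun h => hab ⟨rfl, h⟩
    refine ⟨x ⟨r, by omega⟩ / b ^ r, ?_⟩
    have hzlow : ∀ j (hj : j < r), x ⟨j, by omega⟩ = 0 := by
      intro j hj
      have e := h1 j hj
      rw [zero_mul] at e
      exact (mul_eq_zero.mp e.symm).resolve_left hb
    have hzhigh : ∀ j (hj1 : r + 1 ≤ j) (hj2 : j ≤ 2 * r), x ⟨j, by omega⟩ = 0 := by
      intro j hj1 hj2
      rcases eq_or_lt_of_le hj1 with h | h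
      · have := (mul_eq_zero.mp h2).resolve_left hb
        have ej : j = r + 1 := h.symm
        subst ej
        exact this
      · have e := h3 j (by omega) hj2
        rw [zero_mul] at e
        exact (mul_eq_zero.mp e).resolve_left hb
    funext p
    have hp := p.isLt
    rw [Pi.smul_apply, smul_eq_mul]
    have hetap : (⟨(p : ℕ), hp⟩ : Fin (2 * r + 1)) = p := Fin.eta p hp
    rcases lt_trichotomy (p : ℕ) r with h | h | h
    · rw [← hetap, hzlow _ h]
      simp only [stdVec, Fin.val_mk]
      rw [if_pos (by omega : (p : ℕ) ≤ r), zero_pow (by omega : r - (p : ℕ) ≠ 0)]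
      ring
    · rw [← hetap]
      simp only [stdVec, Fin.val_mk, h]
      rw [if_pos le_rfl, Nat.sub_self, pow_zero, one_mul]
      field_simp
    · rw [← hetap, hzhigh _ (by omega) (by omega)]
      simp only [stdVec, Fin.val_mk]
      rw [if_neg (by omega)]
      ring
  · -- a ≠ 0
    refine ⟨x ⟨0, by omega⟩ / a ^ r, ?_⟩
    have claim1 : ∀ j (hj : j ≤ r), a ^ j * x ⟨j, by omega⟩ = b ^ j * x ⟨0, by omega⟩ := by
      intro j
      induction j with
      | zero => intro _; simp
      | succ i ih =>
        intro hj
        have e := h1 i (by omega)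
        calc a ^ (i + 1) * x ⟨i + 1, by omega⟩
            = a ^ i * (a * x ⟨i + 1, by omega⟩) := by ring
          _ = a ^ i * (b * x ⟨i, by omega⟩) := by rw [e]
          _ = b * (a ^ i * x ⟨i, by omega⟩) := by ring
          _ = b * (b ^ i * x ⟨0, by omega⟩) := by rw [ih (by omega)]
          _ = b ^ (i + 1) * x ⟨0, by omega⟩ := by ring
    have claim2 : ∀ m (hm : m ≤ r - 1), x ⟨2 * r - m, by omega⟩ = 0 := by
      intro m
      induction m with
      | zero =>
        intro _
        have : (2 * r - 0) = 2 * r := by omega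
        simp only [this]
        exact (mul_eq_zero.mp h4).resolve_left ha
      | succ i ih =>
        intro hm
        have e := h3 (2 * r - i) (by omega) (by omega)
        have e1 : 2 * r - i - 1 = 2 * r - (i + 1) := by omega
        simp only [e1] at e
        rw [ih (by omega), mul_zero] at e
        exact (mul_eq_zero.mp e.symm).resolve_left ha
    have hzhigh : ∀ j (hj1 : r + 1 ≤ j) (hj2 : j ≤ 2 * r), x ⟨j, by omega⟩ = 0 := by
      intro j hj1 hj2
      have e := claim2 (2 * r - j) (by omega)
      have e1 : 2 * r - (2 * r - j) = j := by omega
      simp only [e1] at e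
      exact e
    funext p
    have hp := p.isLt
    rw [Pi.smul_apply, smul_eq_mul]
    have hetap : (⟨(p : ℕ), hp⟩ : Fin (2 * r + 1)) = p := Fin.eta p hp
    by_cases h : (p : ℕ) ≤ r
    · have e := claim1 (p : ℕ) h
      rw [hetap] at e
      simp only [stdVec]
      rw [if_pos h]
      have pow1 : a ^ (r - (p : ℕ)) * a ^ (p : ℕ) = a ^ r := by
        rw [← pow_add]
        congr 1
        omega
      have har : a ^ r ≠ 0 := pow_ne_zero _ ha
      rw [div_mul_eq_mul_div, eq_div_iff har]
      calc x p * a ^ r = x p * (a ^ (r - (p : ℕ)) * a ^ (p : ℕ)) := by rw [pow1]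
        _ = a ^ (r - (p : ℕ)) * (a ^ (p : ℕ) * x p) := by ring
        _ = a ^ (r - (p : ℕ)) * (b ^ (p : ℕ) * x ⟨0, by omega⟩) := by rw [e]
        _ = x ⟨0, by omega⟩ * (a ^ (r - (p : ℕ)) * b ^ (p : ℕ)) := by ring
    · rw [← hetap, hzhigh _ (by omega) (by omega)]
      simp only [stdVec, Fin.val_mk]
      rw [if_neg (by omega)]
      ring

end Helpers

section ChangeOfBasis

variable {K V : Type*} [Field K] [AddCommGroup V] [Module K V]

/-- Two surjections from a finite-dimensional space differ by an automorphism. -/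
lemma exists_equiv_comp {n : ℕ} (φ ψ : (Fin n → K) →ₗ[K] V)
    (h : LinearMap.range φ = LinearMap.range ψ) :
    ∃ α : (Fin n → K) ≃ₗ[K] (Fin n → K), ∀ x, ψ (α x) = φ x := by
  classical
  set W := LinearMap.range ψ with hW
  let φ' : (Fin n → K) →ₗ[K] W := φ.codRestrict W (fun x => h ▸ LinearMap.mem_range_self φ x)
  let ψ' : (Fin n → K) →ₗ[K] W := ψ.codRestrict W (fun x => LinearMap.mem_range_self ψ x)
  have hψ'surj : LinearMap.range ψ' = ⊤ := by
    rw [LinearMap.range_eq_top]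
    rintro ⟨y, hy⟩
    obtain ⟨x, hx⟩ := hy
    exact ⟨x, Subtype.ext hx⟩
  obtain ⟨s, hs⟩ := ψ'.exists_rightInverse_of_surjective hψ'surj
  have hrk : Module.finrank K (LinearMap.ker φ) = Module.finrank K (LinearMap.ker ψ) := by
    have a1 := LinearMap.finrank_range_add_finrank_ker φ
    have a2 := LinearMap.finrank_range_add_finrank_ker ψ
    rw [h, hW] at a1
    omega
  let e : LinearMap.ker φ ≃ₗ[K] LinearMap.ker ψ := LinearEquiv.ofFinrankEq _ _ hrk
  let eL : LinearMap.ker φ →ₗ[K] LinearMap.ker ψ := e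
  obtain ⟨U, hU⟩ := Submodule.exists_isCompl (LinearMap.ker φ)
  let π : (Fin n → K) →ₗ[K] LinearMap.ker φ := (LinearMap.ker φ).linearProjOfIsCompl U hU
  let α₀ : (Fin n → K) →ₗ[K] (Fin n → K) :=
    s ∘ₗ φ' + (LinearMap.ker ψ).subtype ∘ₗ eL ∘ₗ π
  have hα₀ : ∀ x, α₀ x = s (φ' x) + ((eL (π x) : Fin n → K)) := fun x => rfl
  have hsv : ∀ w : W, ψ (s w) = (w : V) := by
    intro w
    have h1 : ψ' (s w) = w := by rw [← LinearMap.comp_apply, hs]; rfl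
    exact congrArg Subtype.val h1
  have hψα : ∀ x, ψ (α₀ x) = φ x := by
    intro x
    rw [hα₀, map_add, hsv]
    have h0 : ψ ((eL (π x) : Fin n → K)) = 0 := (eL (π x)).2
    rw [h0, add_zero]
    rfl
  have hinj : Function.Injective α₀ := by
    rw [← LinearMap.ker_eq_bot, Submodule.eq_bot_iff]
    intro x hx0
    have hx : α₀ x = 0 := hx0
    have hφx : φ x = 0 := by rw [← hψα x, hx, map_zero]
    have hxk : x ∈ LinearMap.ker φ := LinearMap.mem_ker.mpr hφx
    have hπ : π x = ⟨x, hxk⟩ := Submodule.linearProjOfIsCompl_apply_left hU ⟨x, hxk⟩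
    have hφ'x : φ' x = 0 := Subtype.ext hφx
    have hval : α₀ x = ((eL ⟨x, hxk⟩ : Fin n → K)) := by
      rw [hα₀, hπ, hφ'x, map_zero, zero_add]
    rw [hx] at hval
    have h0 : (⟨x, hxk⟩ : LinearMap.ker φ) = 0 := by
      have h1 : eL ⟨x, hxk⟩ = eL 0 := by
        rw [map_zero]
        exact Subtype.ext hval.symm
      exact e.injective h1
    exact congrArg Subtype.val h0
  have hsurj : Function.Surjective α₀ := LinearMap.injective_iff_surjective.mp hinj
  exact ⟨LinearEquiv.ofBijective α₀ ⟨hinj, hsurj⟩, hψα⟩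

/-- Two `n`-tuples spanning the same subspace are related by an invertible matrix. -/
lemma exists_unit_matrix {n : ℕ} (f g : Fin n → V)
    (h : Submodule.span K (Set.range f) = Submodule.span K (Set.range g)) :
    ∃ A : Matrix (Fin n) (Fin n) K, IsUnit A.det ∧ ∀ i, f i = ∑ j, A i j • g j := by
  classical
  obtain ⟨α, hα⟩ := exists_equiv_comp (Fintype.linearCombination K f)
    (Fintype.linearCombination K g)
    (by rw [Fintype.range_linearCombination, Fintype.range_linearCombination, h])
  refine ⟨Matrix.transpose (LinearMap.toMatrix' (α : (Fin n → K) →ₗ[K] (Fin n → K))), ?_, ?_⟩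
  · rw [Matrix.det_transpose, ← Matrix.isUnit_iff_isUnit_det]
    have hu : IsUnit ((α : (Fin n → K) →ₗ[K] (Fin n → K))) :=
      (Module.End.isUnit_iff _).mpr α.bijective
    have h2 : IsUnit (LinearMap.toMatrixAlgEquiv'
        ((α : (Fin n → K) →ₗ[K] (Fin n → K)))) :=
      hu.map (LinearMap.toMatrixAlgEquiv' :
        ((Fin n → K) →ₗ[K] (Fin n → K)) ≃ₐ[K] Matrix (Fin n) (Fin n) K)
    exact h2
  · intro i
    have h1 : f i = Fintype.linearCombination K f (Pi.single i 1) := by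
      rw [Fintype.linearCombination_apply_single, one_smul]
    have h2 : Fintype.linearCombination K g (α (Pi.single i 1)) =
        ∑ j, (α (Pi.single i 1)) j • g j := Fintype.linearCombination_apply _ _ _
    rw [h1, ← hα, h2]
    refine Finset.sum_congr rfl fun j _ => ?_
    congr 1

end ChangeOfBasis

section SpanStd

open MvPolynomial

variable {K : Type*} [Field K]

lemma span_stdVec (r : ℕ) :
    Submodule.span K (Set.range (stdVec r (X 0) (X 1) :
        Fin (2 * r + 1) → MvPolynomial (Fin 2) K)) =
      homogeneousSubmodule (Fin 2) K r := by
  apply le_antisymm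
  · rw [Submodule.span_le]
    rintro _ ⟨j, rfl⟩
    simp only [SetLike.mem_coe, mem_homogeneousSubmodule]
    by_cases hj : (j : ℕ) ≤ r
    · simp only [stdVec]
      rw [if_pos hj]
      have h1 := (isHomogeneous_X K (0 : Fin 2)).pow (r - (j : ℕ))
      have h2 := (isHomogeneous_X K (1 : Fin 2)).pow (j : ℕ)
      have h3 := h1.mul h2
      have e : 1 * (r - (j : ℕ)) + 1 * (j : ℕ) = r := by omega
      rw [e] at h3
      exact h3
    · simp only [stdVec]
      rw [if_neg hj]
      exact isHomogeneous_zero _ _ _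
  · intro p hp
    have hp' : p.IsHomogeneous r := hp
    rw [← support_sum_monomial_coeff p]
    apply Submodule.sum_mem
    intro d hd
    have hcoeff : coeff d p ≠ 0 := mem_support_iff.mp hd
    have hdeg : d.degree = r := by
      by_contra hne
      exact hcoeff (hp'.coeff_eq_zero hne)
    have hsum : d 0 + d 1 = r := by
      have h1 : d.degree = ∑ i : Fin 2, d i := by
        rw [Finsupp.degree]
        exact Finset.sum_subset (Finset.subset_univ _)
          (fun i _ hi => Finsupp.notMem_support_iff.mp hi)
      rw [Fin.sum_univ_two] at h1
      exact h1.symm.trans hdeg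
    have hd1 : d 1 ≤ r := by omega
    have hmon : (monomial d) (coeff d p)
        = coeff d p • stdVec r (X 0) (X 1) (⟨d 1, by omega⟩ : Fin (2 * r + 1)) := by
      simp only [stdVec, Fin.val_mk]
      rw [if_pos hd1]
      have hd0 : r - d 1 = d 0 := by omega
      rw [hd0, X_pow_eq_monomial, X_pow_eq_monomial, monomial_mul, one_mul]
      have hdd : Finsupp.single (0 : Fin 2) (d 0) + Finsupp.single 1 (d 1) = d := by
        ext i
        fin_cases i <;> simp [Finsupp.single_apply]
      rw [hdd, smul_monomial, smul_eq_mul, mul_one]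
    rw [hmon]
    exact Submodule.smul_mem _ _ (Submodule.subset_span ⟨⟨d 1, by omega⟩, rfl⟩)

end SpanStd

section MapAndHom

open MvPolynomial

lemma skewM_map {k k' : Type*} [CommRing k] [CommRing k'] (r : ℕ) (u v : k)
    (φ : k →+* k') : (skewM r u v).map φ = skewM r (φ u) (φ v) := by
  funext p q
  simp only [skewM, Matrix.map_apply, map_sub, map_add, apply_ite φ, map_neg, map_zero]

lemma skewM_entry_hom {K : Type*} [Field K] (r : ℕ) (s t : Fin (2 * r + 1)) :
    (skewM r (X 0 : MvPolynomial (Fin 2) K) (X 1) s t).IsHomogeneous 1 := by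
  have hx0 : (X 0 : MvPolynomial (Fin 2) K).IsHomogeneous 1 := isHomogeneous_X K 0
  have hx1 : (X 1 : MvPolynomial (Fin 2) K).IsHomogeneous 1 := isHomogeneous_X K 1
  have hz : (0 : MvPolynomial (Fin 2) K).IsHomogeneous 1 := isHomogeneous_zero _ _ _
  simp only [skewM]
  apply MvPolynomial.IsHomogeneous.sub
  apply MvPolynomial.IsHomogeneous.sub
  apply MvPolynomial.IsHomogeneous.add
  · split_ifs <;> assumption
  · split_ifs with h
    · exact hx0.neg
    · exact hz
  · split_ifs <;> assumption
  · split_ifs with h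
    · exact hx0.neg
    · exact hz

end MapAndHom

open Matrix MvPolynomial

/-- Let `n = 2r+1 ≥ 3` be odd and let `f₁, …, f_n ∈ K[y₀,y₁]` be homogeneous forms of degree
`r` spanning the space of all degree-`r` forms. Then there is an `n × n` skew-symmetric
matrix `M` of homogeneous linear forms with `M · (f₁, …, f_n)ᵀ = 0`, and such that for every
`(a,b) ≠ (0,0)` the evaluated matrix `M(a,b)` has rank exactly `n - 1 = 2r`, with kernel
spanned by the nonzero vector `(f₁(a,b), …, f_n(a,b))`. -/
theorem statement15 (K : Type*) [Field K] (r : ℕ) (hr : 1 ≤ r)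
    (f : Fin (2 * r + 1) → MvPolynomial (Fin 2) K)
    (hfhom : ∀ p, (f p).IsHomogeneous r)
    (hfspan : Submodule.span K (Set.range f) = MvPolynomial.homogeneousSubmodule (Fin 2) K r) :
    ∃ M : Matrix (Fin (2 * r + 1)) (Fin (2 * r + 1)) (MvPolynomial (Fin 2) K),
      M.transpose = -M ∧
      (∀ p q, (M p q).IsHomogeneous 1) ∧
      M.mulVec f = 0 ∧
      ∀ a b : K, ¬(a = 0 ∧ b = 0) →
        ((M.map (MvPolynomial.eval ![a, b])).rank = 2 * r ∧
        (fun p : Fin (2 * r + 1) => MvPolynomial.eval ![a, b] (f p)) ≠ 0 ∧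
        LinearMap.ker (M.map (MvPolynomial.eval ![a, b])).mulVecLin =
          Submodule.span K {fun p : Fin (2 * r + 1) => MvPolynomial.eval ![a, b] (f p)}) := by
  classical
  set g : Fin (2 * r + 1) → MvPolynomial (Fin 2) K := stdVec r (X 0) (X 1) with hg
  obtain ⟨A, hAdet, hAf⟩ := exists_unit_matrix f g (by rw [hfspan, ← span_stdVec r])
  set B := A⁻¹ with hB
  have hBA : B * A = 1 := Matrix.nonsing_inv_mul A hAdet
  have hAB : A * B = 1 := Matrix.mul_nonsing_inv A hAdet
  set S : Matrix (Fin (2 * r + 1)) (Fin (2 * r + 1)) (MvPolynomial (Fin 2) K) :=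
    skewM r (X 0) (X 1) with hS
  set P : Matrix (Fin (2 * r + 1)) (Fin (2 * r + 1)) (MvPolynomial (Fin 2) K) :=
    B.map (MvPolynomial.C : K →+* MvPolynomial (Fin 2) K) with hP
  set M : Matrix (Fin (2 * r + 1)) (Fin (2 * r + 1)) (MvPolynomial (Fin 2) K) :=
    Pᵀ * S * P with hM
  -- the polynomial tuple `f` as a matrix product
  have hfg : f = (A.map (MvPolynomial.C : K →+* MvPolynomial (Fin 2) K)).mulVec g := by
    funext i
    rw [hAf i]
    simp only [Matrix.mulVec, dotProduct, Matrix.map_apply, smul_eq_C_mul]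
  -- M · f = 0
  have hPA : P * (A.map (MvPolynomial.C : K →+* MvPolynomial (Fin 2) K)) = 1 := by
    rw [hP, ← Matrix.map_mul, hBA, Matrix.map_one _ (map_zero _) (map_one _)]
  have hMf : M.mulVec f = 0 := by
    rw [hfg, Matrix.mulVec_mulVec, hM, Matrix.mul_assoc (Pᵀ * S) P, hPA, Matrix.mul_one,
      ← Matrix.mulVec_mulVec, hS, hg, skewM_mulVec_stdVec, Matrix.mulVec_zero]
  refine ⟨M, ?_, ?_, hMf, ?_⟩
  · -- skew-symmetry
    rw [hM, Matrix.transpose_mul, Matrix.transpose_mul, Matrix.transpose_transpose, hS,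
      skewM_transpose]
    simp [Matrix.mul_neg, Matrix.neg_mul, Matrix.mul_assoc]
  · -- homogeneity of entries
    intro p q
    have hMpq : M p q = ∑ t, (∑ s, Pᵀ p s * S s t) * P t q := by
      simp [hM, Matrix.mul_apply]
    rw [hMpq]
    apply MvPolynomial.IsHomogeneous.sum
    intro t _
    have h1 : (∑ s, Pᵀ p s * S s t).IsHomogeneous 1 := by
      apply MvPolynomial.IsHomogeneous.sum
      intro s _
      have hc : (Pᵀ p s).IsHomogeneous 0 := by
        rw [hP, Matrix.transpose_apply, Matrix.map_apply]
        exact isHomogeneous_C _ _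
      have hs : (S s t).IsHomogeneous 1 := skewM_entry_hom r s t
      simpa using hc.mul hs
    have hc2 : (P t q).IsHomogeneous 0 := by
      rw [hP, Matrix.map_apply]
      exact isHomogeneous_C _ _
    simpa using h1.mul hc2
  · -- evaluation at (a, b)
    intro a b hab
    set ev : MvPolynomial (Fin 2) K →+* K := MvPolynomial.eval ![a, b] with hev
    have heva : ev (X 0) = a := by simp [hev]
    have hevb : ev (X 1) = b := by simp [hev]
    set u : Fin (2 * r + 1) → K := fun p => ev (f p) with hu
    set w : Fin (2 * r + 1) → K := stdVec r a b with hw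
    have hBmap : (B.map (MvPolynomial.C : K →+* MvPolynomial (Fin 2) K)).map ⇑ev = B := by
      rw [Matrix.map_map]
      funext i j
      simp [Matrix.map_apply, hev]
    have hMe : M.map ⇑ev = Bᵀ * skewM r a b * B := by
      rw [hM, Matrix.map_mul, Matrix.map_mul, hP, Matrix.transpose_map, hBmap, hS,
        skewM_map r _ _ ev, heva, hevb]
    have hgw : (fun j => ev (g j)) = w := by
      funext j
      simp only [hg, hw, stdVec, apply_ite ev, _root_.map_mul, map_pow, heva, hevb, map_zero]
    have huw : u = A.mulVec w := by
      funext i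
      rw [hu]
      simp only [hAf i, map_sum, smul_eq_C_mul, _root_.map_mul, eval_C]
      rw [Matrix.mulVec, dotProduct]
      refine Finset.sum_congr rfl fun j _ => ?_
      rw [← hgw]
      simp [hev]
    have hwne : w ≠ 0 := by
      intro h0
      rcases not_and_or.mp hab with ha | hb
      · have h2 := congrFun h0 (⟨0, by omega⟩ : Fin (2 * r + 1))
        simp only [hw, stdVec, Fin.val_mk, Pi.zero_apply] at h2
        rw [if_pos (by omega)] at h2
        simp only [Nat.sub_zero, pow_zero, mul_one] at h2
        exact ha ((pow_eq_zero_iff (show r ≠ 0 by omega)).mp h2)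
      · have h2 := congrFun h0 (⟨r, by omega⟩ : Fin (2 * r + 1))
        simp only [hw, stdVec, Fin.val_mk, Pi.zero_apply] at h2
        rw [if_pos (by omega)] at h2
        simp only [Nat.sub_self, pow_zero, one_mul] at h2
        exact hb ((pow_eq_zero_iff (show r ≠ 0 by omega)).mp h2)
    have hune : u ≠ 0 := by
      intro h0
      apply hwne
      calc w = (B * A).mulVec w := by rw [hBA, Matrix.one_mulVec]
        _ = B.mulVec (A.mulVec w) := (Matrix.mulVec_mulVec _ _ _).symm
        _ = B.mulVec u := by rw [huw]
        _ = 0 := by rw [h0, Matrix.mulVec_zero]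
    have hker : LinearMap.ker (M.map ⇑ev).mulVecLin = Submodule.span K {u} := by
      apply le_antisymm
      · intro x hx
        rw [LinearMap.mem_ker, Matrix.mulVecLin_apply, hMe] at hx
        have hx2 : Bᵀ.mulVec ((skewM r a b * B).mulVec x) = 0 := by
          rw [Matrix.mulVec_mulVec, ← Matrix.mul_assoc]
          exact hx
        have h5 : Aᵀ * Bᵀ = 1 := by
          rw [← Matrix.transpose_mul, hBA, Matrix.transpose_one]
        have hzero : (skewM r a b).mulVec (B.mulVec x) = 0 := by
          rw [Matrix.mulVec_mulVec]
          calc (skewM r a b * B).mulVec x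
              = (Aᵀ * Bᵀ).mulVec ((skewM r a b * B).mulVec x) := by
                rw [h5, Matrix.one_mulVec]
            _ = Aᵀ.mulVec (Bᵀ.mulVec ((skewM r a b * B).mulVec x)) :=
                (Matrix.mulVec_mulVec _ _ _).symm
            _ = 0 := by rw [hx2, Matrix.mulVec_zero]
        obtain ⟨c, hc⟩ := skewM_ker r hr a b hab _ hzero
        have hxc : x = c • u := by
          calc x = (A * B).mulVec x := by rw [hAB, Matrix.one_mulVec]
            _ = A.mulVec (B.mulVec x) := (Matrix.mulVec_mulVec _ _ _).symm
            _ = A.mulVec (c • w) := by rw [hc, hw]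
            _ = c • A.mulVec w := Matrix.mulVec_smul _ _ _
            _ = c • u := by rw [huw]
        rw [hxc]
        exact Submodule.smul_mem _ _ (Submodule.mem_span_singleton_self u)
      · rw [Submodule.span_singleton_le_iff_mem, LinearMap.mem_ker, Matrix.mulVecLin_apply]
        have hcomm : (M.map ⇑ev).mulVec u = fun p => ev ((M.mulVec f) p) := by
          funext p
          rw [Matrix.mulVec, dotProduct, Matrix.mulVec, dotProduct, map_sum]
          refine Finset.sum_congr rfl fun q _ => ?_
          rw [Matrix.map_apply, _root_.map_mul, hu]
        rw [hcomm, hMf]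
        funext p
        simp
    refine ⟨?_, hune, hker⟩
    have h6 := LinearMap.finrank_range_add_finrank_ker (M.map ⇑ev).mulVecLin
    rw [hker, finrank_span_singleton hune, Module.finrank_fin_fun] at h6
    rw [Matrix.rank]
    omega
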